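/- (Performance difference via greedy advantage.) For any two policies π, π' in an infinite-horizon discounted MDP: v^{π'} - v^{π} = Σ_{t=1}^∞ γ^{t-1} E_{(s,a)∼d_t^{π}}[Q^{π'}(s, π'(s)) - Q^{π'}(s,a)], where d_t^π is the state-action distribution at time t under π starting from d₀. -/

import Mathlib

open Finset

/-- One step of the state-action distribution dynamics under policy `π`. -/
noncomputable def stepDist {S A : Type*} [Fintype S] [Fintype A] [DecidableEq A]
    (P : S → A → S → ℝ) (π : S → A) (ν : S → A → ℝ) : S → A → ℝ :=
  fun s' a' => if a' = π s' then ∑ s, ∑ a, ν s a * P s a s' else 0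

/-- Point mass at the state-action pair `(s0, a0)`. -/
noncomputable def pointMass {S A : Type*} [DecidableEq S] [DecidableEq A]
    (s0 : S) (a0 : A) : S → A → ℝ :=
  fun s a => if s = s0 ∧ a = a0 then 1 else 0

/-- `Qpi P Rbar γ π s0 a0` is Q^π(s0,a0). -/
noncomputable def Qpi {S A : Type*} [Fintype S] [Fintype A] [DecidableEq S] [DecidableEq A]
    (P : S → A → S → ℝ) (Rbar : S → A → ℝ) (γ : ℝ) (π : S → A) (s0 : S) (a0 : A) : ℝ :=
  ∑' t : ℕ, γ ^ t *
    ∑ s, ∑ a, ((stepDist P π)^[t] (pointMass s0 a0)) s a * Rbar s a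

/-- Initial state-action distribution `d₁ = d₀ × π`. -/
noncomputable def initDist {S A : Type*} [DecidableEq A]
    (d0 : S → ℝ) (π : S → A) : S → A → ℝ :=
  fun s a => if a = π s then d0 s else 0

/-- `vpi` is the expected discounted return of policy `π` from `d₀`. -/
noncomputable def vpi {S A : Type*} [Fintype S] [Fintype A] [DecidableEq A]
    (P : S → A → S → ℝ) (Rbar : S → A → ℝ) (γ : ℝ) (d0 : S → ℝ) (π : S → A) : ℝ :=
  ∑' t : ℕ, γ ^ t * ∑ s, ∑ a, ((stepDist P π)^[t] (initDist d0 π)) s a * Rbar s a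

section helpers
variable {S A : Type*} [Fintype S] [Fintype A] [DecidableEq S] [DecidableEq A]

lemma sum_pointMass_mul (s0 : S) (a0 : A) (g : S → A → ℝ) :
    ∑ s, ∑ a, pointMass s0 a0 s a * g s a = g s0 a0 := by
  simp [pointMass, ite_and, Finset.sum_ite_eq]

lemma stepDist_lin (P : S → A → S → ℝ) (p : S → A) (ν : S → A → ℝ) (s' : S) (a' : A) :
    stepDist P p ν s' a' = ∑ s, ∑ a, ν s a * stepDist P p (pointMass s a) s' a' := by
  have key : ∀ s a, stepDist P p (pointMass s a) s' a'
      = if a' = p s' then P s a s' else 0 := by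
    intro s a
    unfold stepDist
    by_cases h : a' = p s'
    · simp only [h, if_pos rfl]
      exact sum_pointMass_mul s a (fun u b => P u b s')
    · simp [h]
  simp only [key]
  unfold stepDist
  by_cases h : a' = p s' <;> simp [h]


lemma sum4_comm {β : Type*} [AddCommMonoid β] (f : S → A → S → A → β) :
    ∑ x, ∑ y, ∑ u, ∑ v, f x y u v = ∑ u, ∑ v, ∑ x, ∑ y, f x y u v := by
  have h1 : (∑ x, ∑ y, ∑ u, ∑ v, f x y u v)
      = ∑ p : S × A, ∑ q : S × A, f p.1 p.2 q.1 q.2 := by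
    simp only [Fintype.sum_prod_type]
  have h2 : (∑ u, ∑ v, ∑ x, ∑ y, f x y u v)
      = ∑ q : S × A, ∑ p : S × A, f p.1 p.2 q.1 q.2 := by
    simp only [Fintype.sum_prod_type]
  rw [h1, h2]
  exact Finset.sum_comm

lemma iterate_stepDist_lin (P : S → A → S → ℝ) (p : S → A) :
    ∀ (t : ℕ) (ν : S → A → ℝ) (u : S) (b : A),
      (stepDist P p)^[t] ν u b
        = ∑ s, ∑ a, ν s a * (stepDist P p)^[t] (pointMass s a) u b := by
  intro t
  induction t with
  | zero =>
      intro ν u b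
      simp [pointMass, ite_and, mul_ite, Finset.sum_ite_eq]
  | succ t ih =>
      intro ν u b
      rw [Function.iterate_succ_apply, ih (stepDist P p ν)]
      have hstep : ∀ s' a', stepDist P p ν s' a'
          = ∑ s, ∑ a, ν s a * stepDist P p (pointMass s a) s' a' :=
        stepDist_lin P p ν
      have hR : ∀ s a, (stepDist P p)^[t+1] (pointMass s a) u b
          = ∑ x, ∑ x1, stepDist P p (pointMass s a) x x1 *
              (stepDist P p)^[t] (pointMass x x1) u b := fun s a => by
        rw [Function.iterate_succ_apply, ih]
      simp only [hR, hstep, Finset.sum_mul, Finset.mul_sum]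
      rw [sum4_comm (f := fun x x1 x2 i => ν x2 i * stepDist P p (pointMass x2 i) x x1 *
        (stepDist P p)^[t] (pointMass x x1) u b)]
      exact Finset.sum_congr rfl fun x2 _ => Finset.sum_congr rfl fun i _ =>
        Finset.sum_congr rfl fun x _ => Finset.sum_congr rfl fun x1 _ => by ring

lemma stepDist_nonneg (P : S → A → S → ℝ) (hP : ∀ s a, (∀ s', 0 ≤ P s a s') ∧ ∑ s', P s a s' = 1)
    (p : S → A) (ν : S → A → ℝ) (hν : ∀ s a, 0 ≤ ν s a) :
    ∀ s' a', 0 ≤ stepDist P p ν s' a' := by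
  intro s' a'
  unfold stepDist
  by_cases h : a' = p s'
  · simp only [h, if_pos rfl]
    exact Finset.sum_nonneg fun s _ => Finset.sum_nonneg fun a _ =>
      mul_nonneg (hν s a) ((hP s a).1 s')
  · simp [h]

lemma stepDist_mass (P : S → A → S → ℝ) (hP : ∀ s a, (∀ s', 0 ≤ P s a s') ∧ ∑ s', P s a s' = 1)
    (p : S → A) (ν : S → A → ℝ) :
    ∑ s', ∑ a', stepDist P p ν s' a' = ∑ s, ∑ a, ν s a := by
  unfold stepDist
  have h1 : ∀ s' : S, (∑ a', if a' = p s' then ∑ s, ∑ a, ν s a * P s a s' else 0)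
      = ∑ s, ∑ a, ν s a * P s a s' := by
    intro s'; simp [Finset.sum_ite_eq']
  simp only [h1]
  rw [Finset.sum_comm]
  refine Finset.sum_congr rfl fun s _ => ?_
  rw [Finset.sum_comm]
  refine Finset.sum_congr rfl fun a _ => ?_
  rw [← Finset.mul_sum, (hP s a).2, mul_one]

lemma iterate_nonneg (P : S → A → S → ℝ) (hP : ∀ s a, (∀ s', 0 ≤ P s a s') ∧ ∑ s', P s a s' = 1)
    (p : S → A) (ν : S → A → ℝ) (hν : ∀ s a, 0 ≤ ν s a) (t : ℕ) :
    ∀ s a, 0 ≤ (stepDist P p)^[t] ν s a := by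
  induction t with
  | zero => simpa using hν
  | succ t ih =>
      rw [Function.iterate_succ_apply']
      exact stepDist_nonneg P hP p _ ih

lemma iterate_mass (P : S → A → S → ℝ) (hP : ∀ s a, (∀ s', 0 ≤ P s a s') ∧ ∑ s', P s a s' = 1)
    (p : S → A) (ν : S → A → ℝ) (t : ℕ) :
    ∑ s, ∑ a, (stepDist P p)^[t] ν s a = ∑ s, ∑ a, ν s a := by
  induction t with
  | zero => simp
  | succ t ih =>
      rw [Function.iterate_succ_apply', stepDist_mass P hP p _, ih]

lemma pay_bound (Rmax : ℝ) (Rbar : S → A → ℝ) (hR : ∀ s a, 0 ≤ Rbar s a ∧ Rbar s a ≤ Rmax)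
    (ν : S → A → ℝ) (hν : ∀ s a, 0 ≤ ν s a) (hm : ∑ s, ∑ a, ν s a = 1) :
    0 ≤ ∑ s, ∑ a, ν s a * Rbar s a ∧ (∑ s, ∑ a, ν s a * Rbar s a) ≤ Rmax := by
  constructor
  · exact Finset.sum_nonneg fun s _ => Finset.sum_nonneg fun a _ =>
      mul_nonneg (hν s a) (hR s a).1
  · calc (∑ s, ∑ a, ν s a * Rbar s a) ≤ ∑ s, ∑ a, ν s a * Rmax := by
          refine Finset.sum_le_sum fun s _ => Finset.sum_le_sum fun a _ =>
            mul_le_mul_of_nonneg_left (hR s a).2 (hν s a)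
        _ = Rmax := by
          simp only [← Finset.sum_mul]
          rw [hm, one_mul]

lemma traj_summable (P : S → A → S → ℝ)
    (hP : ∀ s a, (∀ s', 0 ≤ P s a s') ∧ ∑ s', P s a s' = 1)
    (Rmax : ℝ) (Rbar : S → A → ℝ) (hR : ∀ s a, 0 ≤ Rbar s a ∧ Rbar s a ≤ Rmax)
    (γ : ℝ) (hγ0 : 0 ≤ γ) (hγ1 : γ < 1) (p : S → A)
    (ν : S → A → ℝ) (hν : ∀ s a, 0 ≤ ν s a) (hm : ∑ s, ∑ a, ν s a = 1) :
    Summable (fun t : ℕ => γ ^ t * ∑ s, ∑ a, (stepDist P p)^[t] ν s a * Rbar s a) := by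
  have hb : ∀ t : ℕ, ‖γ ^ t * ∑ s, ∑ a, (stepDist P p)^[t] ν s a * Rbar s a‖ ≤ Rmax * γ ^ t := by
    intro t
    have h1 := pay_bound Rmax Rbar hR _ (iterate_nonneg P hP p ν hν t)
      ((iterate_mass P hP p ν t).trans hm)
    rw [Real.norm_eq_abs, abs_mul, abs_of_nonneg (pow_nonneg hγ0 t), abs_of_nonneg h1.1]
    calc γ ^ t * (∑ s, ∑ a, (stepDist P p)^[t] ν s a * Rbar s a) ≤ γ ^ t * Rmax :=
          mul_le_mul_of_nonneg_left h1.2 (pow_nonneg hγ0 t)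
      _ = Rmax * γ ^ t := mul_comm _ _
  exact Summable.of_norm_bounded ((summable_geometric_of_lt_one hγ0 hγ1).mul_left Rmax) hb

lemma pointMass_nonneg (s0 : S) (a0 : A) : ∀ s a, 0 ≤ pointMass s0 a0 s a := by
  intro s a; unfold pointMass; split <;> norm_num

lemma pointMass_mass (s0 : S) (a0 : A) : ∑ s, ∑ a, pointMass s0 a0 s a = 1 := by
  simpa using sum_pointMass_mul s0 a0 (fun _ _ => (1:ℝ))

lemma Qpi_summable (P : S → A → S → ℝ)
    (hP : ∀ s a, (∀ s', 0 ≤ P s a s') ∧ ∑ s', P s a s' = 1)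
    (Rmax : ℝ) (Rbar : S → A → ℝ) (hR : ∀ s a, 0 ≤ Rbar s a ∧ Rbar s a ≤ Rmax)
    (γ : ℝ) (hγ0 : 0 ≤ γ) (hγ1 : γ < 1) (p : S → A) (s0 : S) (a0 : A) :
    Summable (fun t : ℕ =>
      γ ^ t * ∑ s, ∑ a, (stepDist P p)^[t] (pointMass s0 a0) s a * Rbar s a) :=
  traj_summable P hP Rmax Rbar hR γ hγ0 hγ1 p _ (pointMass_nonneg s0 a0) (pointMass_mass s0 a0)

/-- Linearity of the discounted return in the initial distribution. -/
lemma tsum_iter_lin (P : S → A → S → ℝ)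
    (hP : ∀ s a, (∀ s', 0 ≤ P s a s') ∧ ∑ s', P s a s' = 1)
    (Rmax : ℝ) (Rbar : S → A → ℝ) (hR : ∀ s a, 0 ≤ Rbar s a ∧ Rbar s a ≤ Rmax)
    (γ : ℝ) (hγ0 : 0 ≤ γ) (hγ1 : γ < 1) (p : S → A) (ν : S → A → ℝ) :
    (∑' t : ℕ, γ ^ t * ∑ s, ∑ a, (stepDist P p)^[t] ν s a * Rbar s a)
      = ∑ s, ∑ a, ν s a * Qpi P Rbar γ p s a := by
  have hterm : ∀ t : ℕ, γ ^ t * ∑ u, ∑ b, (stepDist P p)^[t] ν u b * Rbar u b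
      = ∑ s, ∑ a, ν s a *
          (γ ^ t * ∑ u, ∑ b, (stepDist P p)^[t] (pointMass s a) u b * Rbar u b) := by
    intro t
    simp only [iterate_stepDist_lin P p t ν, Finset.sum_mul, Finset.mul_sum]
    rw [sum4_comm (f := fun u b s a => γ ^ t * (ν s a *
      (stepDist P p)^[t] (pointMass s a) u b * Rbar u b))]
    refine Finset.sum_congr rfl fun s _ => Finset.sum_congr rfl fun a _ => ?_
    exact Finset.sum_congr rfl fun u _ => Finset.sum_congr rfl fun b _ => by ring
  calc (∑' t : ℕ, γ ^ t * ∑ s, ∑ a, (stepDist P p)^[t] ν s a * Rbar s a)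
      = ∑' t : ℕ, ∑ s, ∑ a, ν s a *
          (γ ^ t * ∑ u, ∑ b, (stepDist P p)^[t] (pointMass s a) u b * Rbar u b) := by
        exact tsum_congr hterm
    _ = ∑ s, ∑ a, ν s a * Qpi P Rbar γ p s a := by
        have hsum : ∀ s : S, ∀ a : A, Summable (fun t : ℕ => ν s a *
            (γ ^ t * ∑ u, ∑ b, (stepDist P p)^[t] (pointMass s a) u b * Rbar u b)) :=
          fun s a => Summable.mul_left _ (Qpi_summable P hP Rmax Rbar hR γ hγ0 hγ1 p s a)
        rw [Summable.tsum_finsetSum (fun s _ => summable_sum (fun a _ => hsum s a))]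
        refine Finset.sum_congr rfl fun s _ => ?_
        rw [Summable.tsum_finsetSum (fun a _ => hsum s a)]
        refine Finset.sum_congr rfl fun a _ => ?_
        rw [tsum_mul_left]; rfl

lemma Qpi_nonneg (P : S → A → S → ℝ)
    (hP : ∀ s a, (∀ s', 0 ≤ P s a s') ∧ ∑ s', P s a s' = 1)
    (Rmax : ℝ) (Rbar : S → A → ℝ) (hR : ∀ s a, 0 ≤ Rbar s a ∧ Rbar s a ≤ Rmax)
    (γ : ℝ) (hγ0 : 0 ≤ γ) (p : S → A) (s0 : S) (a0 : A) :
    0 ≤ Qpi P Rbar γ p s0 a0 := by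
  refine tsum_nonneg fun t => mul_nonneg (pow_nonneg hγ0 t) ?_
  exact (pay_bound Rmax Rbar hR _
    (iterate_nonneg P hP p _ (pointMass_nonneg s0 a0) t)
    ((iterate_mass P hP p _ t).trans (pointMass_mass s0 a0))).1

lemma Qpi_le (P : S → A → S → ℝ)
    (hP : ∀ s a, (∀ s', 0 ≤ P s a s') ∧ ∑ s', P s a s' = 1)
    (Rmax : ℝ) (Rbar : S → A → ℝ) (hR : ∀ s a, 0 ≤ Rbar s a ∧ Rbar s a ≤ Rmax)
    (γ : ℝ) (hγ0 : 0 ≤ γ) (hγ1 : γ < 1) (p : S → A) (s0 : S) (a0 : A) :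
    Qpi P Rbar γ p s0 a0 ≤ Rmax / (1 - γ) := by
  have h := Summable.tsum_le_tsum (f := fun t : ℕ =>
      γ ^ t * ∑ s, ∑ a, (stepDist P p)^[t] (pointMass s0 a0) s a * Rbar s a)
    (g := fun t : ℕ => Rmax * γ ^ t) (fun t => ?_)
    (Qpi_summable P hP Rmax Rbar hR γ hγ0 hγ1 p s0 a0)
    ((summable_geometric_of_lt_one hγ0 hγ1).mul_left Rmax)
  · calc Qpi P Rbar γ p s0 a0 ≤ ∑' t : ℕ, Rmax * γ ^ t := h
      _ = Rmax / (1 - γ) := by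
        rw [tsum_mul_left, tsum_geometric_of_lt_one hγ0 hγ1]; ring
  · have h1 := pay_bound Rmax Rbar hR _
      (iterate_nonneg P hP p _ (pointMass_nonneg s0 a0) t)
      ((iterate_mass P hP p _ t).trans (pointMass_mass s0 a0))
    calc γ ^ t * ∑ s, ∑ a, (stepDist P p)^[t] (pointMass s0 a0) s a * Rbar s a
        ≤ γ ^ t * Rmax := mul_le_mul_of_nonneg_left h1.2 (pow_nonneg hγ0 t)
      _ = Rmax * γ ^ t := mul_comm _ _

lemma Qpi_bellman (P : S → A → S → ℝ)
    (hP : ∀ s a, (∀ s', 0 ≤ P s a s') ∧ ∑ s', P s a s' = 1)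
    (Rmax : ℝ) (Rbar : S → A → ℝ) (hR : ∀ s a, 0 ≤ Rbar s a ∧ Rbar s a ≤ Rmax)
    (γ : ℝ) (hγ0 : 0 ≤ γ) (hγ1 : γ < 1) (p : S → A) (s0 : S) (a0 : A) :
    Qpi P Rbar γ p s0 a0
      = Rbar s0 a0 + γ * ∑ s', P s0 a0 s' * Qpi P Rbar γ p s' (p s') := by
  have hs := Qpi_summable P hP Rmax Rbar hR γ hγ0 hγ1 p s0 a0
  rw [Qpi, Summable.tsum_eq_zero_add hs]
  congr 1
  · simpa using sum_pointMass_mul s0 a0 Rbar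
  · have hterm : ∀ t : ℕ, γ ^ (t + 1) *
        ∑ s, ∑ a, (stepDist P p)^[t+1] (pointMass s0 a0) s a * Rbar s a
        = γ * (γ ^ t * ∑ s, ∑ a,
            (stepDist P p)^[t] (stepDist P p (pointMass s0 a0)) s a * Rbar s a) := by
      intro t
      rw [Function.iterate_succ_apply]
      ring
    calc (∑' t : ℕ, γ ^ (t + 1) *
          ∑ s, ∑ a, (stepDist P p)^[t+1] (pointMass s0 a0) s a * Rbar s a)
        = γ * ∑' t : ℕ, γ ^ t * ∑ s, ∑ a,
            (stepDist P p)^[t] (stepDist P p (pointMass s0 a0)) s a * Rbar s a := by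
          rw [← tsum_mul_left]; exact tsum_congr hterm
      _ = γ * ∑ s', P s0 a0 s' * Qpi P Rbar γ p s' (p s') := by
          congr 1
          rw [tsum_iter_lin P hP Rmax Rbar hR γ hγ0 hγ1 p _]
          have hpm : ∀ u b, stepDist P p (pointMass s0 a0) u b
              = if b = p u then P s0 a0 u else 0 := by
            intro u b
            unfold stepDist
            by_cases h : b = p u
            · simp only [h, if_pos rfl]
              exact sum_pointMass_mul s0 a0 (fun x y => P x y u)
            · simp [h]
          simp only [hpm]
          refine Finset.sum_congr rfl fun u _ => ?_
          rw [Finset.sum_eq_single (p u)] <;> simp +contextual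

lemma sum3_comm {β : Type*} [AddCommMonoid β] (f : S → A → S → β) :
    ∑ s, ∑ a, ∑ u, f s a u = ∑ u, ∑ s, ∑ a, f s a u := by
  have h1 : (∑ s, ∑ a, ∑ u, f s a u) = ∑ p : S × A, ∑ u, f p.1 p.2 u := by
    simp only [Fintype.sum_prod_type]
  have h2 : (∑ u, ∑ s, ∑ a, f s a u) = ∑ u, ∑ p : S × A, f p.1 p.2 u := by
    simp only [Fintype.sum_prod_type]
  rw [h1, h2]
  exact Finset.sum_comm

end helpers

/-- Performance difference lemma (Kakade & Langford 2002, Lemma 6.1). -/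
theorem stmt17 {S A : Type*} [Fintype S] [Fintype A] [DecidableEq S] [DecidableEq A]
    (P : S → A → S → ℝ)
    (hP : ∀ s a, (∀ s', 0 ≤ P s a s') ∧ ∑ s', P s a s' = 1)
    (Rmax : ℝ) (Rbar : S → A → ℝ)
    (hR : ∀ s a, 0 ≤ Rbar s a ∧ Rbar s a ≤ Rmax)
    (γ : ℝ) (hγ0 : 0 ≤ γ) (hγ1 : γ < 1)
    (d0 : S → ℝ) (hd0 : ∀ s, 0 ≤ d0 s) (hd01 : ∑ s, d0 s = 1)
    (π π' : S → A) :
    vpi P Rbar γ d0 π' - vpi P Rbar γ d0 π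
      = ∑' t : ℕ, γ ^ t *
          ∑ s, ∑ a, ((stepDist P π)^[t] (initDist d0 π)) s a *
            (Qpi P Rbar γ π' s (π' s) - Qpi P Rbar γ π' s a) := by
  have hν0 : ∀ s a, 0 ≤ initDist d0 π s a := by
    intro s a; unfold initDist; split
    · exact hd0 s
    · exact le_refl 0
  have hν0m : ∑ s, ∑ a, initDist d0 π s a = 1 := by
    unfold initDist
    rw [← hd01]
    exact Finset.sum_congr rfl fun s _ => by simp [Finset.sum_ite_eq']
  have hνt : ∀ t s a, 0 ≤ (stepDist P π)^[t] (initDist d0 π) s a :=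
    fun t => iterate_nonneg P hP π _ hν0 t
  have hνtm : ∀ t, ∑ s, ∑ a, (stepDist P π)^[t] (initDist d0 π) s a = 1 :=
    fun t => (iterate_mass P hP π _ t).trans hν0m
  have hQ0 : ∀ s a, 0 ≤ Qpi P Rbar γ π' s a := fun s a =>
    Qpi_nonneg P hP Rmax Rbar hR γ hγ0 π' s a
  have hQle : ∀ s a, Qpi P Rbar γ π' s a ≤ Rmax / (1 - γ) := fun s a =>
    Qpi_le P hP Rmax Rbar hR γ hγ0 hγ1 π' s a
  set W : ℕ → ℝ := fun t => ∑ s, ∑ a, (stepDist P π)^[t] (initDist d0 π) s a *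
      Qpi P Rbar γ π' s (π' s) with hW
  set u : ℕ → ℝ := fun t => γ ^ t * W t with hu
  have hWb : ∀ t, 0 ≤ W t ∧ W t ≤ Rmax / (1 - γ) := by
    intro t
    constructor
    · exact Finset.sum_nonneg fun s _ => Finset.sum_nonneg fun a _ =>
        mul_nonneg (hνt t s a) (hQ0 s (π' s))
    · calc W t ≤ ∑ s, ∑ a, (stepDist P π)^[t] (initDist d0 π) s a * (Rmax / (1 - γ)) :=
          Finset.sum_le_sum fun s _ => Finset.sum_le_sum fun a _ =>
            mul_le_mul_of_nonneg_left (hQle s (π' s)) (hνt t s a)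
        _ = Rmax / (1 - γ) := by
          simp only [← Finset.sum_mul]
          rw [hνtm t, one_mul]
  have C1 : ∀ t, (∑ s, ∑ a, (stepDist P π)^[t] (initDist d0 π) s a * Qpi P Rbar γ π' s a)
      = (∑ s, ∑ a, (stepDist P π)^[t] (initDist d0 π) s a * Rbar s a) + γ * W (t+1) := by
    intro t
    have hb : ∀ s a, Qpi P Rbar γ π' s a
        = Rbar s a + γ * ∑ s', P s a s' * Qpi P Rbar γ π' s' (π' s') :=
      fun s a => Qpi_bellman P hP Rmax Rbar hR γ hγ0 hγ1 π' s a
    have hnext : W (t+1)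
        = ∑ s', (∑ s, ∑ a, (stepDist P π)^[t] (initDist d0 π) s a * P s a s') *
            Qpi P Rbar γ π' s' (π' s') := by
      rw [hW]
      simp only
      rw [Function.iterate_succ_apply']
      refine Finset.sum_congr rfl fun s' _ => ?_
      unfold stepDist
      simp [ite_mul, Finset.sum_ite_eq']
    have expand : (∑ s, ∑ a, (stepDist P π)^[t] (initDist d0 π) s a * Qpi P Rbar γ π' s a)
        = ∑ s, ∑ a, (stepDist P π)^[t] (initDist d0 π) s a *
            (Rbar s a + γ * ∑ s', P s a s' * Qpi P Rbar γ π' s' (π' s')) :=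
      Finset.sum_congr rfl fun s _ => Finset.sum_congr rfl fun a _ => by rw [hb s a]
    rw [expand, hnext]
    simp only [mul_add, Finset.sum_add_distrib]
    congr 1
    have hsw : ∀ s a, (stepDist P π)^[t] (initDist d0 π) s a *
        (γ * ∑ s', P s a s' * Qpi P Rbar γ π' s' (π' s'))
        = ∑ s', γ * ((stepDist P π)^[t] (initDist d0 π) s a * P s a s' *
            Qpi P Rbar γ π' s' (π' s')) := by
      intro s a
      rw [Finset.mul_sum, Finset.mul_sum]
      exact Finset.sum_congr rfl fun s' _ => by ring
    simp only [hsw]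
    rw [sum3_comm (f := fun s a s' => γ * ((stepDist P π)^[t] (initDist d0 π) s a * P s a s' *
      Qpi P Rbar γ π' s' (π' s')))]
    rw [Finset.mul_sum]
    refine Finset.sum_congr rfl fun s' _ => ?_
    simp only [Finset.sum_mul, Finset.mul_sum]
  have C2 : vpi P Rbar γ d0 π' = W 0 := by
    rw [vpi, tsum_iter_lin P hP Rmax Rbar hR γ hγ0 hγ1 π' _, hW]
    simp only [Function.iterate_zero, id_eq]
    unfold initDist
    refine Finset.sum_congr rfl fun s _ => ?_
    simp [ite_mul, Finset.sum_ite_eq']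
  have Sf : Summable (fun t : ℕ =>
      γ ^ t * ∑ s, ∑ a, (stepDist P π)^[t] (initDist d0 π) s a * Rbar s a) :=
    traj_summable P hP Rmax Rbar hR γ hγ0 hγ1 π _ hν0 hν0m
  have hub : ∀ t, 0 ≤ u t ∧ u t ≤ Rmax / (1 - γ) * γ ^ t := by
    intro t
    constructor
    · exact mul_nonneg (pow_nonneg hγ0 t) (hWb t).1
    · rw [hu]
      calc γ ^ t * W t ≤ γ ^ t * (Rmax / (1 - γ)) :=
            mul_le_mul_of_nonneg_left (hWb t).2 (pow_nonneg hγ0 t)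
        _ = Rmax / (1 - γ) * γ ^ t := mul_comm _ _
  have Su : Summable (fun t : ℕ => u t - u (t+1)) := by
    refine Summable.of_norm_bounded
      (((summable_geometric_of_lt_one hγ0 hγ1).mul_left (Rmax / (1 - γ) * (1 + γ)))) fun t => ?_
    have h1 := hub t
    have h2 := hub (t+1)
    rw [Real.norm_eq_abs]
    rw [abs_sub_le_iff]
    constructor
    · have : u (t+1) ≥ 0 := h2.1
      calc u t - u (t+1) ≤ u t := by linarith
        _ ≤ Rmax / (1 - γ) * γ ^ t := h1.2
        _ ≤ Rmax / (1 - γ) * (1 + γ) * γ ^ t := by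
          have hq : 0 ≤ Rmax / (1 - γ) * γ ^ t := le_trans h1.1 h1.2
          nlinarith [pow_nonneg hγ0 t]
    · calc u (t+1) - u t ≤ u (t+1) := by linarith [h1.1]
        _ ≤ Rmax / (1 - γ) * γ ^ (t+1) := h2.2
        _ ≤ Rmax / (1 - γ) * (1 + γ) * γ ^ t := by
          have hq : 0 ≤ Rmax / (1 - γ) * γ ^ (t+1) := le_trans h2.1 h2.2
          rw [pow_succ] at *
          nlinarith [pow_nonneg hγ0 t]
  have hu0 : Filter.Tendsto u Filter.atTop (nhds 0) := by
    have hgeo : Filter.Tendsto (fun t : ℕ => Rmax / (1 - γ) * γ ^ t) Filter.atTop (nhds 0) := by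
      have := (tendsto_pow_atTop_nhds_zero_of_lt_one hγ0 hγ1).const_mul (Rmax / (1 - γ))
      simpa using this
    exact squeeze_zero (fun t => (hub t).1) (fun t => (hub t).2) hgeo
  have Htel : HasSum (fun t : ℕ => u t - u (t+1)) (u 0) := by
    rw [Summable.hasSum_iff_tendsto_nat Su]
    have hps : ∀ n : ℕ, ∑ i ∈ Finset.range n, (u i - u (i+1)) = u 0 - u n :=
      fun n => Finset.sum_range_sub' u n
    simp only [hps]
    simpa using Filter.Tendsto.sub (tendsto_const_nhds (x := u 0)) hu0
  have Dt : ∀ t : ℕ, γ ^ t * ∑ s, ∑ a, (stepDist P π)^[t] (initDist d0 π) s a *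
        (Qpi P Rbar γ π' s (π' s) - Qpi P Rbar γ π' s a)
      = (u t - u (t+1))
          - γ ^ t * ∑ s, ∑ a, (stepDist P π)^[t] (initDist d0 π) s a * Rbar s a := by
    intro t
    have hsplit : (∑ s, ∑ a, (stepDist P π)^[t] (initDist d0 π) s a *
          (Qpi P Rbar γ π' s (π' s) - Qpi P Rbar γ π' s a))
        = W t - ∑ s, ∑ a, (stepDist P π)^[t] (initDist d0 π) s a * Qpi P Rbar γ π' s a := by
      rw [hW]
      simp only [mul_sub, Finset.sum_sub_distrib]
    rw [hsplit, C1 t, hu]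
    simp only
    ring
  calc vpi P Rbar γ d0 π' - vpi P Rbar γ d0 π
      = u 0 - vpi P Rbar γ d0 π := by
        rw [C2, hu]; simp
    _ = (∑' t : ℕ, (u t - u (t+1)))
          - ∑' t : ℕ, γ ^ t * ∑ s, ∑ a, (stepDist P π)^[t] (initDist d0 π) s a * Rbar s a := by
        rw [Htel.tsum_eq]; rfl
    _ = ∑' t : ℕ, ((u t - u (t+1))
          - γ ^ t * ∑ s, ∑ a, (stepDist P π)^[t] (initDist d0 π) s a * Rbar s a) :=
        (Summable.tsum_sub Su Sf).symm
    _ = ∑' t : ℕ, γ ^ t *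
          ∑ s, ∑ a, ((stepDist P π)^[t] (initDist d0 π)) s a *
            (Qpi P Rbar γ π' s (π' s) - Qpi P Rbar γ π' s a) :=
        (tsum_congr Dt).symm
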